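/- Let (Z_j)_{j∈ℕ} be independent, identically distributed real-valued random variables, let a ∈ (−1,1) with a ≠ 0, and suppose there are constants C > 0 and α > 0 such that P(|Z_0| > t) ≤ C t^{−α} for all t > 0. Then there exists a constant K > 0 such that for every k ∈ ℕ and every ε > 0: P( Σ_{j=k+1}^{∞} |a|^j |Z_j| > ε ) ≤ K |a|^{αk} ε^{−α}. (Here the series of nonnegative terms is understood as a sum in [0,∞].) In particular, the tail of the linear (autoregressive) process Σ_{j≥0} a^j Z_{−j} beyond lag k is bounded in probability by a_k Φ(ε) with a_k = |a|^{αk} and Φ(ε) = K ε^{−α}. -/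

import Mathlib

open MeasureTheory

/-- For i.i.d. innovations `Z_j` with polynomial tails
`P(|Z₀| > t) ≤ C t^{−α}` and `a ∈ (−1,1) \ {0}`, the tail of the linear (AR(1)) process
beyond lag `k` satisfies the P-NED bound
`P(Σ_{j=k+1}^∞ |a|^j |Z_j| > ε) ≤ K |a|^{αk} ε^{−α}` for some constant `K > 0`. -/
theorem ar1_pned_tail_bound
    {Ω : Type*} [MeasurableSpace Ω] (μ : Measure Ω) [IsProbabilityMeasure μ]
    (Z : ℕ → Ω → ℝ) (hmeas : ∀ j, Measurable (Z j))
    (hindep : ProbabilityTheory.iIndepFun Z μ)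
    (hident : ∀ j, μ.map (Z j) = μ.map (Z 0))
    (a : ℝ) (ha₁ : -1 < a) (ha₂ : a < 1) (ha₀ : a ≠ 0)
    (C α : ℝ) (hC : 0 < C) (hα : 0 < α)
    (htail : ∀ t : ℝ, 0 < t → (μ {ω | t < |Z 0 ω|}).toReal ≤ C * t ^ (-α)) :
    ∃ K : ℝ, 0 < K ∧ ∀ (k : ℕ) (ε : ℝ), 0 < ε →
      (μ {ω | ENNReal.ofReal ε <
          ∑' j : ℕ, ENNReal.ofReal (|a| ^ (k + 1 + j) * |Z (k + 1 + j) ω|)}).toReal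
        ≤ K * |a| ^ (α * k) * ε ^ (-α) := by
  have hr0 : 0 < |a| := abs_pos.mpr ha₀
  have hr1 : |a| < 1 := abs_lt.mpr ⟨ha₁, ha₂⟩
  set r := |a| with hrdef
  set s := Real.sqrt r with hsdef
  have hs0 : 0 < s := Real.sqrt_pos.mpr hr0
  have hs1 : s < 1 := by
    have := Real.sqrt_lt_sqrt hr0.le hr1
    simpa using this
  have hsr : s * s = r := Real.mul_self_sqrt hr0.le
  set q := s ^ α with hqdef
  have hq0 : 0 < q := Real.rpow_pos_of_pos hs0 α
  have hq1 : q < 1 := Real.rpow_lt_one hs0.le hs1 hα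
  have h1s : 0 < 1 - s := by linarith
  have h1q : 0 < 1 - q := by linarith
  refine ⟨C * (1 - s) ^ (-α) * r ^ α / (1 - q), by positivity, ?_⟩
  intro k ε hε
  set A : ℝ := ε * (1 - s) / r ^ (k + 1) with hAdef
  have hA : 0 < A := by positivity
  -- threshold for the j-th term
  set t : ℕ → ℝ := fun j => A / s ^ j with htdef
  have ht : ∀ j, 0 < t j := fun j => by positivity
  -- step 1: inclusion into a union of events
  have hsub : {ω | ENNReal.ofReal ε <
        ∑' j : ℕ, ENNReal.ofReal (r ^ (k + 1 + j) * |Z (k + 1 + j) ω|)}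
      ⊆ ⋃ j : ℕ, {ω | t j < |Z (k + 1 + j) ω|} := by
    intro ω hω
    by_contra hcon
    simp only [Set.mem_iUnion, Set.mem_setOf_eq, not_exists, not_lt] at hcon
    have hterm : ∀ j : ℕ, r ^ (k + 1 + j) * |Z (k + 1 + j) ω| ≤ ε * (1 - s) * s ^ j := by
      intro j
      have h1 : r ^ (k + 1 + j) * |Z (k + 1 + j) ω| ≤ r ^ (k + 1 + j) * t j :=
        mul_le_mul_of_nonneg_left (hcon j) (by positivity)
      have h2 : r ^ (k + 1 + j) * t j = ε * (1 - s) * s ^ j := by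
        have hrs : r ^ j = s ^ j * s ^ j := by rw [← hsr, mul_pow]
        rw [htdef, hAdef]
        simp only
        rw [pow_add, hrs]
        field_simp
      linarith [h1, h2 ▸ h1]
    have hle : (∑' j : ℕ, ENNReal.ofReal (r ^ (k + 1 + j) * |Z (k + 1 + j) ω|))
        ≤ ∑' j : ℕ, ENNReal.ofReal (ε * (1 - s) * s ^ j) :=
      ENNReal.tsum_le_tsum fun j => ENNReal.ofReal_le_ofReal (hterm j)
    have hsummable : Summable (fun j : ℕ => ε * (1 - s) * s ^ j) :=
      (summable_geometric_of_lt_one hs0.le hs1).mul_left _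
    have hsum : (∑' j : ℕ, ENNReal.ofReal (ε * (1 - s) * s ^ j)) = ENNReal.ofReal ε := by
      rw [← ENNReal.ofReal_tsum_of_nonneg (fun j => by positivity) hsummable]
      congr 1
      rw [tsum_mul_left, tsum_geometric_of_lt_one hs0.le hs1]
      field_simp
    have := hω.trans_le (hle.trans hsum.le)
    exact lt_irrefl _ this
  -- step 2: identical distribution
  have hms : ∀ c : ℝ, MeasurableSet {x : ℝ | c < |x|} := fun c =>
    measurableSet_lt measurable_const measurable_abs
  have hmeq : ∀ (j : ℕ) (c : ℝ), μ {ω | c < |Z j ω|} = μ {ω | c < |Z 0 ω|} := by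
    intro j c
    have h1 : {ω | c < |Z j ω|} = Z j ⁻¹' {x | c < |x|} := rfl
    have h2 : {ω | c < |Z 0 ω|} = Z 0 ⁻¹' {x | c < |x|} := rfl
    rw [h1, h2, ← Measure.map_apply (hmeas j) (hms c), ← Measure.map_apply (hmeas 0) (hms c),
      hident j]
  -- step 3: tail bound in ENNReal form
  have htailE : ∀ c : ℝ, 0 < c → μ {ω | c < |Z 0 ω|} ≤ ENNReal.ofReal (C * c ^ (-α)) := by
    intro c hc
    have := htail c hc
    rw [← ENNReal.ofReal_toReal (measure_ne_top μ _)]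
    exact ENNReal.ofReal_le_ofReal this
  -- geometric identity for the thresholds
  have htpow : ∀ j : ℕ, C * (t j) ^ (-α) = (C * A ^ (-α)) * q ^ j := by
    intro j
    have hsj : (0:ℝ) < s ^ j := by positivity
    have h1 : (t j) ^ (-α) = A ^ (-α) * (s ^ j) ^ α := by
      rw [htdef]
      simp only
      rw [Real.div_rpow hA.le hsj.le, Real.rpow_neg hsj.le, div_eq_mul_inv, inv_inv]
    have h2 : (s ^ j : ℝ) ^ α = q ^ j := by
      rw [hqdef, ← Real.rpow_natCast s j, ← Real.rpow_mul hs0.le, mul_comm,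
        Real.rpow_mul hs0.le, Real.rpow_natCast]
    rw [h1, h2]; ring
  set B : ℝ := C * A ^ (-α) with hBdef
  have hB : 0 < B := by positivity
  -- step 4: sum the bounds
  have hmeasbound : μ {ω | ENNReal.ofReal ε <
        ∑' j : ℕ, ENNReal.ofReal (r ^ (k + 1 + j) * |Z (k + 1 + j) ω|)}
      ≤ ENNReal.ofReal (B / (1 - q)) := by
    calc μ _ ≤ μ (⋃ j : ℕ, {ω | t j < |Z (k + 1 + j) ω|}) := measure_mono hsub
      _ ≤ ∑' j : ℕ, μ {ω | t j < |Z (k + 1 + j) ω|} := measure_iUnion_le _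
      _ ≤ ∑' j : ℕ, ENNReal.ofReal (B * q ^ j) := by
          refine ENNReal.tsum_le_tsum fun j => ?_
          rw [hmeq (k + 1 + j) (t j)]
          have := htailE (t j) (ht j)
          rwa [htpow j] at this
      _ = ENNReal.ofReal (∑' j : ℕ, B * q ^ j) := by
          rw [← ENNReal.ofReal_tsum_of_nonneg (fun j => by positivity)
            ((summable_geometric_of_lt_one hq0.le hq1).mul_left _)]
      _ = ENNReal.ofReal (B / (1 - q)) := by
          rw [tsum_mul_left, tsum_geometric_of_lt_one hq0.le hq1]
          rw [div_eq_mul_inv]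
  -- step 5: identify the constant
  have hfinal : B / (1 - q) = (C * (1 - s) ^ (-α) * r ^ α / (1 - q)) * r ^ (α * k) * ε ^ (-α) := by
    have hrk : (0:ℝ) < r ^ (k + 1) := by positivity
    have hA' : A ^ (-α) = ε ^ (-α) * (1 - s) ^ (-α) * r ^ (α * (k + 1 : ℕ)) := by
      rw [hAdef, Real.div_rpow (by positivity) hrk.le, Real.rpow_neg hrk.le, div_eq_mul_inv, inv_inv,
        Real.mul_rpow hε.le h1s.le, ← Real.rpow_natCast r (k + 1), ← Real.rpow_mul hr0.le,
        mul_comm ((k + 1 : ℕ) : ℝ) α]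
    have hsplit : r ^ (α * (k + 1 : ℕ)) = r ^ (α * k) * r ^ α := by
      rw [← Real.rpow_add hr0]
      congr 1
      push_cast
      ring
    rw [hBdef, hA', hsplit]
    field_simp
  have hnonneg : 0 ≤ (C * (1 - s) ^ (-α) * r ^ α / (1 - q)) * r ^ (α * k) * ε ^ (-α) := by
    positivity
  calc (μ _).toReal ≤ B / (1 - q) := by
        refine ENNReal.toReal_le_of_le_ofReal (by positivity) ?_
        exact hmeasbound
    _ = _ := by rw [hfinal]
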